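/- Let M be a finite Frobenius bimodule over a finite ring R with generating character χ. Then the normalized homogeneous weight on M is given by ω(v) = 1 − (1/|R*|) Σ_{α∈R*} χ(vα) for all v ∈ M. -/

import Mathlib

open MulOpposite

/-- `χ` is a (two-sided) generating character of the finite `(R,R)`-bimodule `M`:
the map `r ↦ r·χ` (where `(r·χ)(v) = χ(v·r)`, using the right action of `R` on `M`)
and the map `r ↦ χ·r` (where `(χ·r)(v) = χ(r·v)`) are bijections from `R` onto the
character group `M̂`, i.e. `M̂` is free of rank one as a left and as a right `R`-module
with basis `χ`. -/
def IsGenChar (R M : Type*) [Ring R] [AddCommGroup M]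
    [Module R M] [Module Rᵐᵒᵖ M] (χ : AddChar M ℂˣ) : Prop :=
  (Function.Injective fun r : R => fun v : M => χ (op r • v)) ∧
  (∀ ψ : AddChar M ℂˣ, ∃ r : R, ∀ v : M, ψ v = χ (op r • v)) ∧
  (Function.Injective fun r : R => fun v : M => χ (r • v)) ∧
  (∀ ψ : AddChar M ℂˣ, ∃ r : R, ∀ v : M, ψ v = χ (r • v))

/-- `M` is a Frobenius bimodule over `R`: `_R M ≅ _R R̂` and `M_R ≅ R̂_R`, equivalently
the character bimodule `M̂` is free of rank one on each side, with a common generator. -/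
def IsFrobeniusBimodule (R M : Type*) [Ring R] [AddCommGroup M]
    [Module R M] [Module Rᵐᵒᵖ M] : Prop :=
  ∃ χ : AddChar M ℂˣ, IsGenChar R M χ

section Aux

open Classical

set_option linter.unusedSectionVars false

variable {R M : Type*} [Ring R] [Fintype R] [AddCommGroup M] [Fintype M]
  [Module R M] [Module Rᵐᵒᵖ M] [SMulCommClass R Rᵐᵒᵖ M]

/-- In a finite monoid, a right inverse is a left inverse. -/
private lemma fin_mul_comm {α : Type*} [Monoid α] [Finite α] {a b : α} (h : a * b = 1) :
    b * a = 1 := by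
  have hs : Function.Surjective (fun x : α => a * x) := fun x =>
    ⟨b * x, by simp [← mul_assoc, h]⟩
  have hi : Function.Injective (fun x : α => a * x) :=
    Finite.injective_iff_surjective.2 hs
  have : a * (b * a) = a * 1 := by rw [← mul_assoc, h, one_mul, mul_one]
  exact hi this

/-- Characters with values in `ℂˣ` separate points of a finite abelian group. -/
private lemma exists_addChar_ne_one {u : M} (hu : u ≠ 0) : ∃ ψ : AddChar M ℂˣ, ψ u ≠ 1 := by
  haveI : NeZero ((Monoid.exponent (Multiplicative M) : ℂ)) :=
    ⟨by exact_mod_cast Monoid.exponent_ne_zero_of_finite⟩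
  have ha : (Multiplicative.ofAdd u) ≠ (1 : Multiplicative M) := by
    simpa using hu
  obtain ⟨φ, hφ⟩ :=
    CommGroup.exists_apply_ne_one_of_hasEnoughRootsOfUnity (Multiplicative M) ℂ ha
  exact ⟨AddChar.toMonoidHomEquiv.symm φ, hφ⟩

variable (χ : AddChar M ℂˣ) [Fintype (Submodule Rᵐᵒᵖ R)]

/-- The sum of `χ(v·r)` over a right ideal `I`. -/
private noncomputable def Phi (I : Submodule Rᵐᵒᵖ R) (v : M) : ℂ :=
  ∑ r ∈ Finset.univ.filter (· ∈ I), ((χ (op r • v) : ℂˣ) : ℂ)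

/-- The sum of `χ(v·r)` over `{r : rR = I}`. -/
private noncomputable def Psi (I : Submodule Rᵐᵒᵖ R) (v : M) : ℂ :=
  ∑ r ∈ Finset.univ.filter (fun r : R => Submodule.span Rᵐᵒᵖ {r} = I), ((χ (op r • v) : ℂˣ) : ℂ)

variable {χ}

/-- If `χ(v·r) = 1` for all `r ∈ I` (`I` a right ideal) then the same holds for all
`w ∈ Rv`. -/
private lemma perp_mono (hs : ∀ s : R, ∃ t : R, ∀ m : M, χ (s • m) = χ (op t • m))
    (I : Submodule Rᵐᵒᵖ R) {v w : M} (hvw : w ∈ Submodule.span R {v})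
    (h : ∀ r ∈ I, χ (op r • v) = 1) : ∀ r ∈ I, χ (op r • w) = 1 := by
  obtain ⟨s, rfl⟩ := Submodule.mem_span_singleton.mp hvw
  intro r hr
  obtain ⟨t, ht⟩ := hs s
  have h1 : op r • s • v = s • op r • v := (smul_comm s (op r) v).symm
  have h2 : op t • op r • v = op (r * t) • v := by
    rw [smul_smul, ← op_mul]
  rw [h1, ht, h2]
  apply h
  have := I.smul_mem (op t) hr
  rwa [op_smul_eq_mul] at this

/-- If some `r₀ ∈ I` has `χ(v·r₀) ≠ 1` then `Phi χ I v = 0`. -/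
private lemma Phi_eq_zero (I : Submodule Rᵐᵒᵖ R) {v : M} {r₀ : R} (hr₀ : r₀ ∈ I)
    (hne : χ (op r₀ • v) ≠ 1) : Phi χ I v = 0 := by
  have key : ((χ (op r₀ • v) : ℂˣ) : ℂ) * Phi χ I v = Phi χ I v := by
    rw [Phi, Finset.mul_sum]
    have : ∀ r ∈ Finset.univ.filter (· ∈ I),
        ((χ (op r₀ • v) : ℂˣ) : ℂ) * ((χ (op r • v) : ℂˣ) : ℂ)
          = ((χ (op (r + r₀) • v) : ℂˣ) : ℂ) := by
      intro r _
      rw [op_add, add_smul, AddChar.map_add_eq_mul, Units.val_mul, mul_comm]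
    rw [Finset.sum_congr rfl this]
    apply Finset.sum_nbij' (fun r => r + r₀) (fun r => r - r₀)
    · intro a ha
      simp only [Finset.mem_filter, Finset.mem_univ, true_and] at ha ⊢
      exact I.add_mem ha hr₀
    · intro a ha
      simp only [Finset.mem_filter, Finset.mem_univ, true_and] at ha ⊢
      exact I.sub_mem ha hr₀
    · intro a _; simp
    · intro a _; simp
    · intro a _; rfl
  have h2 : ((((χ (op r₀ • v) : ℂˣ) : ℂ) - 1)) * Phi χ I v = 0 := by
    linear_combination key
  rcases mul_eq_zero.mp h2 with h3 | h3
  · exact absurd (Units.val_eq_one.mp (by linear_combination h3)) hne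
  · exact h3

/-- `Phi χ I v` depends on `v` only through `span R {v}`. -/
private lemma Phi_congr (hs : ∀ s : R, ∃ t : R, ∀ m : M, χ (s • m) = χ (op t • m))
    (I : Submodule Rᵐᵒᵖ R) {v w : M} (hvw : Submodule.span R {v} = Submodule.span R {w}) :
    Phi χ I v = Phi χ I w := by
  have hwv : w ∈ Submodule.span R {v} := hvw ▸ Submodule.mem_span_singleton_self w
  have hvw' : v ∈ Submodule.span R {w} := hvw ▸ Submodule.mem_span_singleton_self v
  by_cases hall : ∀ r ∈ I, χ (op r • v) = 1
  · have hallw : ∀ r ∈ I, χ (op r • w) = 1 := perp_mono hs I hwv hall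
    unfold Phi
    apply Finset.sum_congr rfl
    intro r hr
    simp only [Finset.mem_filter, Finset.mem_univ, true_and] at hr
    rw [hall r hr, hallw r hr]
  · push_neg at hall
    obtain ⟨r₀, hr₀, hne⟩ := hall
    have hallw : ¬ ∀ r ∈ I, χ (op r • w) = 1 := by
      intro hallw
      exact hne (perp_mono hs I hvw' hallw r₀ hr₀)
    push_neg at hallw
    obtain ⟨r₁, hr₁, hne₁⟩ := hallw
    rw [Phi_eq_zero I hr₀ hne, Phi_eq_zero I hr₁ hne₁]

/-- Partition of the sum over `I` according to the right ideal generated. -/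
private lemma Phi_eq_sum_Psi (I : Submodule Rᵐᵒᵖ R) (v : M) :
    Phi χ I v = ∑ J ∈ Finset.univ.filter (· ≤ I), Psi χ J v := by
  rw [Phi]
  rw [← Finset.sum_fiberwise_of_maps_to (g := fun r : R => Submodule.span Rᵐᵒᵖ {r})
    (t := Finset.univ.filter (· ≤ I)) ?_]
  · refine Finset.sum_congr rfl fun J hJ => ?_
    simp only [Finset.mem_filter, Finset.mem_univ, true_and] at hJ
    rw [Psi]
    apply Finset.sum_congr ?_ (fun _ _ => rfl)
    ext r
    simp only [Finset.mem_filter, Finset.mem_univ, true_and]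
    constructor
    · rintro ⟨-, h2⟩; exact h2
    · intro h
      refine ⟨?_, h⟩
      exact hJ (h ▸ Submodule.mem_span_singleton_self r)
  · intro r hr
    simp only [Finset.mem_filter, Finset.mem_univ, true_and] at hr ⊢
    rw [Submodule.span_le, Set.singleton_subset_iff]
    exact hr

/-- `Psi χ I v` depends on `v` only through `span R {v}`. -/
private lemma Psi_congr (hs : ∀ s : R, ∃ t : R, ∀ m : M, χ (s • m) = χ (op t • m))
    {v w : M} (hvw : Submodule.span R {v} = Submodule.span R {w}) (I : Submodule Rᵐᵒᵖ R) :
    Psi χ I v = Psi χ I w := by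
  induction I using WellFoundedLT.induction with
  | ind I IH =>
    have hPhi : Phi χ I v = Phi χ I w := Phi_congr hs I hvw
    rw [Phi_eq_sum_Psi, Phi_eq_sum_Psi] at hPhi
    have hsplit : Finset.univ.filter (· ≤ I)
        = insert I (Finset.univ.filter (· < I)) := by
      ext J
      simp only [Finset.mem_filter, Finset.mem_univ, true_and, Finset.mem_insert]
      rw [le_iff_lt_or_eq]
      tauto
    have hnotmem : I ∉ Finset.univ.filter (· < I) := by simp
    rw [hsplit, Finset.sum_insert hnotmem, Finset.sum_insert hnotmem] at hPhi
    have htail : ∑ J ∈ Finset.univ.filter (· < I), Psi χ J v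
        = ∑ J ∈ Finset.univ.filter (· < I), Psi χ J w := by
      apply Finset.sum_congr rfl
      intro J hJ
      simp only [Finset.mem_filter, Finset.mem_univ, true_and] at hJ
      exact IH J hJ
    rw [htail] at hPhi
    linear_combination hPhi

/-- In a finite ring, `rR = R` iff `r` is a unit. -/
private lemma span_op_singleton_eq_top_iff (r : R) :
    Submodule.span Rᵐᵒᵖ {r} = ⊤ ↔ IsUnit r := by
  constructor
  · intro h
    have h1 : (1 : R) ∈ Submodule.span Rᵐᵒᵖ ({r} : Set R) := h ▸ Submodule.mem_top
    obtain ⟨a, ha⟩ := Submodule.mem_span_singleton.mp h1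
    rw [← op_unop a, op_smul_eq_mul] at ha
    exact ⟨⟨r, unop a, ha, fin_mul_comm ha⟩, rfl⟩
  · intro h
    obtain ⟨u, rfl⟩ := h
    rw [eq_top_iff]
    intro x _
    rw [Submodule.mem_span_singleton]
    exact ⟨op ((u⁻¹ : Rˣ) * x), by simp [op_smul_eq_mul, ← mul_assoc]⟩

/-- The sum over units as `Psi` at `⊤`. -/
private lemma sum_units_eq_Psi_top (v : M) :
    ∑ r ∈ Finset.univ.filter (fun r : R => IsUnit r), ((χ (op r • v) : ℂˣ) : ℂ)
      = Psi (R := R) χ ⊤ v := by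
  rw [Psi]
  apply Finset.sum_congr ?_ (fun _ _ => rfl)
  ext r
  simp [span_op_singleton_eq_top_iff]

/-- For `v ≠ 0` and a unit `α`, the character `w ↦ χ(w·α)` is nontrivial on `Rv`,
so it sums to zero over `Rv`. -/
private lemma sum_span_chi_eq_zero
    (hχ4 : ∀ ψ : AddChar M ℂˣ, ∃ r : R, ∀ m : M, ψ m = χ (r • m))
    {v : M} (hv : v ≠ 0) (α : Rˣ) [Fintype (Submodule.span R ({v} : Set M))] :
    ∑ w : Submodule.span R ({v} : Set M), ((χ (op (α : R) • (w : M)) : ℂˣ) : ℂ) = 0 := by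
  have hnt : ¬ ∀ w ∈ Submodule.span R ({v} : Set M), χ (op (α : R) • w) = 1 := by
    intro hall
    have hu : ∀ ψ : AddChar M ℂˣ, ψ (op (α : R) • v) = 1 := by
      intro ψ
      obtain ⟨r, hr⟩ := hχ4 ψ
      rw [hr]
      have h1 : r • op (α : R) • v = op (α : R) • (r • v) := smul_comm r (op (α : R)) v
      rw [h1]
      exact hall _ (Submodule.smul_mem _ r (Submodule.mem_span_singleton_self v))
    have h0 : op (α : R) • v = 0 := by
      by_contra h
      obtain ⟨ψ, hψ⟩ := exists_addChar_ne_one h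
      exact hψ (hu ψ)
    have hv0 : v = 0 := by
      have := congrArg (fun m => op ((α⁻¹ : Rˣ) : R) • m) h0
      simpa [smul_smul, ← op_mul] using this
    exact hv hv0
  push_neg at hnt
  obtain ⟨w₀, hw₀mem, hw₀⟩ := hnt
  set S : ℂ := ∑ w : Submodule.span R ({v} : Set M), ((χ (op (α : R) • (w : M)) : ℂˣ) : ℂ)
    with hS
  have key : ((χ (op (α : R) • w₀) : ℂˣ) : ℂ) * S = S := by
    conv_rhs => rw [hS,
      ← Equiv.sum_comp (Equiv.addRight (⟨w₀, hw₀mem⟩ : Submodule.span R ({v} : Set M)))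
        (fun w : Submodule.span R ({v} : Set M) => ((χ (op (α : R) • (w : M)) : ℂˣ) : ℂ))]
    rw [hS, Finset.mul_sum]
    apply Finset.sum_congr rfl
    intro w _
    simp only [Equiv.coe_addRight]
    have hcoe : (((w + ⟨w₀, hw₀mem⟩ : Submodule.span R ({v} : Set M))) : M) = (w : M) + w₀ := rfl
    rw [hcoe, smul_add, AddChar.map_add_eq_mul, Units.val_mul, mul_comm]
  have h2 : ((((χ (op (α : R) • w₀) : ℂˣ) : ℂ) - 1)) * S = 0 := by linear_combination key
  rcases mul_eq_zero.mp h2 with h3 | h3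
  · exact absurd (Units.val_eq_one.mp (by linear_combination h3)) hw₀
  · exact h3

end Aux

open Classical in
/-- Let `M` be a finite Frobenius bimodule over a finite ring `R` with generating
character `χ`.  If `ω : M → ℂ` is the normalized (left) homogeneous weight, i.e.
`ω(0) = 0`, `ω` is constant on elements generating the same cyclic submodule, and
`∑_{w ∈ Rv} ω(w) = |Rv|` for all `v ≠ 0`, then
`ω(v) = 1 − (1/|R*|) ∑_{α ∈ R*} χ(v·α)` for all `v ∈ M`. -/
theorem homogeneous_weight_formula
    (R M : Type*) [Ring R] [Fintype R] [AddCommGroup M] [Fintype M]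
    [Module R M] [Module Rᵐᵒᵖ M] [SMulCommClass R Rᵐᵒᵖ M]
    (χ : AddChar M ℂˣ) (hχ : IsGenChar R M χ)
    (ω : M → ℂ) (hω0 : ω 0 = 0)
    (hconst : ∀ v w : M, Submodule.span R {v} = Submodule.span R {w} → ω v = ω w)
    (hsum : ∀ v : M, v ≠ 0 →
      ∑ w : Submodule.span R {v}, ω w = (Nat.card (Submodule.span R {v}) : ℂ)) :
    ∀ v : M, ω v = 1 - (1 / (Nat.card Rˣ : ℂ)) * ∑ α : Rˣ, ((χ (op (α : R) • v) : ℂˣ) : ℂ) := by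
  obtain ⟨hinj_op, hsurj_op, hinj, hsurj⟩ := hχ
  haveI : Finite (Submodule Rᵐᵒᵖ R) :=
    Finite.of_injective _ (SetLike.coe_injective (A := Submodule Rᵐᵒᵖ R))
  haveI : Fintype (Submodule Rᵐᵒᵖ R) := Fintype.ofFinite _
  have hs : ∀ s : R, ∃ t : R, ∀ m : M, χ (s • m) = χ (op t • m) := by
    intro s
    obtain ⟨t, ht⟩ := hsurj_op
      ⟨fun m => χ (s • m), by simp, fun a b => by
        show χ (s • (a + b)) = χ (s • a) * χ (s • b)
        rw [smul_add, AddChar.map_add_eq_mul]⟩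
    exact ⟨t, fun m => ht m⟩
  have hn0 : (Nat.card Rˣ : ℂ) ≠ 0 := by
    have h : Nat.card Rˣ ≠ 0 := Nat.card_pos.ne'
    exact_mod_cast h
  have hunits : ∀ m : M, (∑ α : Rˣ, ((χ (op (α : R) • m) : ℂˣ) : ℂ))
      = Psi (R := R) χ ⊤ m := by
    intro m
    rw [← sum_units_eq_Psi_top]
    refine Finset.sum_bij (fun (α : Rˣ) _ => (α : R)) ?_ ?_ ?_ ?_
    · intro α _
      simp [Units.isUnit]
    · intro a _ b _ h
      exact Units.ext h
    · intro r hr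
      simp only [Finset.mem_filter, Finset.mem_univ, true_and] at hr
      obtain ⟨u, rfl⟩ := hr
      exact ⟨u, Finset.mem_univ _, rfl⟩
    · intro α _
      rfl
  set f : M → ℂ := fun m =>
    1 - (1 / (Nat.card Rˣ : ℂ)) * ∑ α : Rˣ, ((χ (op (α : R) • m) : ℂˣ) : ℂ) with hf
  have hfconst : ∀ v w : M, Submodule.span R {v} = Submodule.span R {w} → f v = f w := by
    intro v w h
    simp only [hf]
    rw [hunits, hunits, Psi_congr hs h ⊤]
  have hf0 : f 0 = 0 := by
    simp only [hf]
    have h1 : ∀ α : Rˣ, ((χ (op (α : R) • (0 : M)) : ℂˣ) : ℂ) = 1 := by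
      intro α; simp
    rw [Finset.sum_congr rfl fun α _ => h1 α]
    rw [Finset.sum_const, Finset.card_univ, nsmul_eq_mul, mul_one]
    rw [Nat.card_eq_fintype_card]
    field_simp
    norm_num
  have hfsum : ∀ v : M, v ≠ 0 →
      ∑ w : Submodule.span R {v}, f w = (Nat.card (Submodule.span R {v}) : ℂ) := by
    intro v hv
    simp only [hf]
    rw [Finset.sum_sub_distrib, Finset.sum_const, Finset.card_univ, nsmul_eq_mul, mul_one]
    rw [← Finset.mul_sum, Finset.sum_comm]
    have hz : ∑ α : Rˣ, ∑ w : Submodule.span R ({v} : Set M),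
        ((χ (op (α : R) • (w : M)) : ℂˣ) : ℂ) = 0 := by
      apply Finset.sum_eq_zero
      intro α _
      exact sum_span_chi_eq_zero hsurj hv α
    rw [hz, mul_zero, sub_zero, Nat.card_eq_fintype_card]
  have main : ∀ k : ℕ, ∀ v : M, Nat.card (Submodule.span R ({v} : Set M)) ≤ k → ω v = f v := by
    intro k
    induction k with
    | zero =>
      intro v hvk
      exfalso
      haveI : Nonempty (Submodule.span R ({v} : Set M)) := ⟨⟨0, Submodule.zero_mem _⟩⟩
      have := Nat.card_pos (α := Submodule.span R ({v} : Set M))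
      omega
    | succ k IH =>
      intro v hvk
      by_cases hv : v = 0
      · rw [hv, hω0, hf0]
      · have hdiff : ∑ w : Submodule.span R ({v} : Set M), (ω w - f w) = 0 := by
          rw [Finset.sum_sub_distrib, hsum v hv, hfsum v hv, sub_self]
        rw [← Finset.sum_filter_add_sum_filter_not (Finset.univ)
          (fun w : Submodule.span R ({v} : Set M) =>
            Submodule.span R ({(w : M)} : Set M) = Submodule.span R ({v} : Set M))
          (fun w => ω w - f w)] at hdiff
        have hzero : ∑ w ∈ Finset.univ.filter (fun w : Submodule.span R ({v} : Set M) =>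
            ¬ Submodule.span R ({(w : M)} : Set M) = Submodule.span R ({v} : Set M)),
            (ω (w : M) - f (w : M)) = 0 := by
          apply Finset.sum_eq_zero
          intro w hw
          simp only [Finset.mem_filter, Finset.mem_univ, true_and] at hw
          have hle : Submodule.span R ({(w : M)} : Set M) ≤ Submodule.span R ({v} : Set M) := by
            rw [Submodule.span_le, Set.singleton_subset_iff]
            exact w.2
          have hlt := lt_of_le_of_ne hle hw
          have hcard : Nat.card (Submodule.span R ({(w : M)} : Set M))
              < Nat.card (Submodule.span R ({v} : Set M)) := by
            have hss : ((Submodule.span R ({(w : M)} : Set M) : Submodule R M) : Set M)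
                ⊂ ((Submodule.span R ({v} : Set M) : Submodule R M) : Set M) :=
              SetLike.coe_ssubset_coe.mpr hlt
            have hcc := Set.ncard_lt_ncard hss (Set.toFinite _)
            rwa [← Nat.card_coe_set_eq, ← Nat.card_coe_set_eq] at hcc
          rw [IH (w : M) (by omega), sub_self]
        rw [hzero, add_zero] at hdiff
        have hterm : ∀ w ∈ Finset.univ.filter (fun w : Submodule.span R ({v} : Set M) =>
            Submodule.span R ({(w : M)} : Set M) = Submodule.span R ({v} : Set M)),
            (ω (w : M) - f (w : M)) = ω v - f v := by
          intro w hw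
          simp only [Finset.mem_filter, Finset.mem_univ, true_and] at hw
          rw [hconst (w : M) v hw, hfconst (w : M) v hw]
        rw [Finset.sum_congr rfl hterm, Finset.sum_const, nsmul_eq_mul] at hdiff
        have hmem : (⟨v, Submodule.mem_span_singleton_self v⟩ :
              Submodule.span R ({v} : Set M))
            ∈ Finset.univ.filter (fun w : Submodule.span R ({v} : Set M) =>
              Submodule.span R ({(w : M)} : Set M) = Submodule.span R ({v} : Set M)) := by
          simp
        have hcardpos : 0 < (Finset.univ.filter (fun w : Submodule.span R ({v} : Set M) =>
            Submodule.span R ({(w : M)} : Set M) = Submodule.span R ({v} : Set M))).card :=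
          Finset.card_pos.mpr ⟨_, hmem⟩
        rcases mul_eq_zero.mp hdiff with h | h
        · exfalso
          have : ((Finset.univ.filter (fun w : Submodule.span R ({v} : Set M) =>
              Submodule.span R ({(w : M)} : Set M)
                = Submodule.span R ({v} : Set M))).card : ℂ) ≠ 0 := by
            exact_mod_cast hcardpos.ne'
          exact this h
        · exact sub_eq_zero.mp h
  intro v
  rw [main (Nat.card (Submodule.span R ({v} : Set M))) v le_rfl]
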